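/- Let Σ be a surface in a 3-dimensional space form of curvature σ, given in isothermal coordinates with first fundamental form E(du²+dv²) and second fundamental form with matrix [[0,1],[1,0]] (asymptotic line coordinates). Then the condition div(S(∇̄K)) = 0 on Σ, where S is the shape operator and K = σ − 1/E² the Gauss curvature, is equivalent to the identity E·E_{uv} − 4E_u·E_v = 0. -/

import Mathlib

/-- For a minimal surface in a space form of curvature `σ` in isothermal asymptotic-line
coordinates (first fundamental form `E(du²+dv²)`, second fundamental form `[[0,1],[1,0]]`),
the divergence condition `div(S(∇̄K)) = 0`, expressed in coordinates as
`(1/E)(∂_u(K_v/E) + ∂_v(K_u/E)) = 0` with `K = σ − 1/E²`, is equivalent to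
`E·E_{uv} − 4E_u·E_v = 0`. -/
theorem divergence_condition_iff
    (σ : ℝ) (E : ℝ → ℝ → ℝ) (s : Set (ℝ × ℝ)) (hs : IsOpen s)
    (hE : ContDiffOn ℝ (⊤ : ℕ∞) (Function.uncurry E) s)
    (hpos : ∀ p ∈ s, 0 < E p.1 p.2) :
    ∀ p ∈ s,
      ((1 / E p.1 p.2) *
          (deriv (fun u => deriv (fun v => σ - 1 / (E u v) ^ 2) p.2 / E u p.2) p.1
            + deriv (fun v => deriv (fun u => σ - 1 / (E u v) ^ 2) p.1 / E p.1 v) p.2) = 0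
        ↔ E p.1 p.2 * deriv (fun v => deriv (fun u => E u v) p.1) p.2
            - 4 * deriv (fun u => E u p.2) p.1 * deriv (fun v => E p.1 v) p.2 = 0) := by
  -- notation
  set f : ℝ × ℝ → ℝ := Function.uncurry E with hfdef
  set g : ℝ × ℝ → (ℝ × ℝ →L[ℝ] ℝ) := fun q => fderiv ℝ f q with hgdef
  have hdiff : ∀ q ∈ s, HasFDerivAt f (g q) q := by
    intro q hq
    exact ((hE.contDiffAt (hs.mem_nhds hq)).differentiableAt (by simp)).hasFDerivAt
  have hg : ContDiffOn ℝ (⊤ : ℕ∞) g s := hE.fderiv_of_isOpen hs (by simp)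
  have hgdiff : ∀ q ∈ s, DifferentiableAt ℝ g q := fun q hq =>
    (hg.contDiffAt (hs.mem_nhds hq)).differentiableAt (by simp)
  have lineU : ∀ (x y : ℝ), HasDerivAt (fun u => ((u, y) : ℝ × ℝ)) (1, 0) x := by
    intro x y
    simpa using (hasDerivAt_id x).prodMk (hasDerivAt_const x y)
  have lineV : ∀ (x y : ℝ), HasDerivAt (fun v => ((x, v) : ℝ × ℝ)) (0, 1) y := by
    intro x y
    simpa using (hasDerivAt_const y x).prodMk (hasDerivAt_id y)
  have dEu : ∀ x y : ℝ, (x, y) ∈ s → HasDerivAt (fun u => E u y) (g (x, y) (1, 0)) x := by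
    intro x y h
    exact (hdiff _ h).comp_hasDerivAt x (lineU x y)
  have dEv : ∀ x y : ℝ, (x, y) ∈ s → HasDerivAt (fun v => E x v) (g (x, y) (0, 1)) y := by
    intro x y h
    exact (hdiff _ h).comp_hasDerivAt y (lineV x y)
  have dGu : ∀ (x y : ℝ) (w : ℝ × ℝ), (x, y) ∈ s →
      HasDerivAt (fun u => g (u, y) w) (fderiv ℝ g (x, y) (1, 0) w) x := by
    intro x y w h
    have h1 : HasDerivAt (fun u => g (u, y)) (fderiv ℝ g (x, y) (1, 0)) x :=
      ((hgdiff _ h).hasFDerivAt).comp_hasDerivAt x (lineU x y)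
    exact ((ContinuousLinearMap.apply ℝ ℝ w).hasFDerivAt).comp_hasDerivAt x h1
  have dGv : ∀ (x y : ℝ) (w : ℝ × ℝ), (x, y) ∈ s →
      HasDerivAt (fun v => g (x, v) w) (fderiv ℝ g (x, y) (0, 1) w) y := by
    intro x y w h
    have h1 : HasDerivAt (fun v => g (x, v)) (fderiv ℝ g (x, y) (0, 1)) y :=
      ((hgdiff _ h).hasFDerivAt).comp_hasDerivAt y (lineV x y)
    exact ((ContinuousLinearMap.apply ℝ ℝ w).hasFDerivAt).comp_hasDerivAt y h1
  have hsymm : ∀ q ∈ s, fderiv ℝ g q (1, 0) (0, 1) = fderiv ℝ g q (0, 1) (1, 0) := by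
    intro q hq
    exact second_derivative_symmetric_of_eventually
      (Filter.eventually_of_mem (hs.mem_nhds hq) (fun r hr => hdiff r hr))
      ((hgdiff q hq).hasFDerivAt) _ _
  -- inner derivative of K in the v direction
  have dKv : ∀ x y : ℝ, (x, y) ∈ s →
      HasDerivAt (fun v => σ - 1 / (E x v) ^ 2)
        (2 * g (x, y) (0, 1) / (E x y) ^ 3) y := by
    intro x y h
    have hne : E x y ≠ 0 := (hpos _ h).ne'
    have h2 : HasDerivAt (fun v => (E x v) ^ 2)
        ((2 : ℕ) * (E x y) ^ (2 - 1) * g (x, y) (0, 1)) y := (dEv x y h).pow 2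
    have h3 := (hasDerivAt_const y (1 : ℝ)).div h2 (pow_ne_zero 2 hne)
    have h4 := (hasDerivAt_const y σ).sub h3
    refine h4.congr_deriv ?_
    field_simp
    ring
  have dKu : ∀ x y : ℝ, (x, y) ∈ s →
      HasDerivAt (fun u => σ - 1 / (E u y) ^ 2)
        (2 * g (x, y) (1, 0) / (E x y) ^ 3) x := by
    intro x y h
    have hne : E x y ≠ 0 := (hpos _ h).ne'
    have h2 : HasDerivAt (fun u => (E u y) ^ 2)
        ((2 : ℕ) * (E x y) ^ (2 - 1) * g (x, y) (1, 0)) x := (dEu x y h).pow 2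
    have h3 := (hasDerivAt_const x (1 : ℝ)).div h2 (pow_ne_zero 2 hne)
    have h4 := (hasDerivAt_const x σ).sub h3
    refine h4.congr_deriv ?_
    field_simp
    ring
  rintro ⟨x, y⟩ hp
  simp only
  have hne : E x y ≠ 0 := (hpos _ hp).ne'
  -- neighborhoods along the coordinate lines
  have hUnhds : ∀ᶠ u in nhds x, (u, y) ∈ s := by
    have : ContinuousAt (fun u : ℝ => ((u, y) : ℝ × ℝ)) x :=
      (continuous_id.prodMk continuous_const).continuousAt
    exact this.preimage_mem_nhds (hs.mem_nhds hp)
  have hVnhds : ∀ᶠ v in nhds y, (x, v) ∈ s := by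
    have : ContinuousAt (fun v : ℝ => ((x, v) : ℝ × ℝ)) y :=
      (continuous_const.prodMk continuous_id).continuousAt
    exact this.preimage_mem_nhds (hs.mem_nhds hp)
  set e : ℝ := E x y with he
  set eu : ℝ := g (x, y) (1, 0) with heu
  set ev : ℝ := g (x, y) (0, 1) with hev
  set euv : ℝ := fderiv ℝ g (x, y) (0, 1) (1, 0) with heuv
  -- the four derivative computations
  have r1 : deriv (fun u => E u y) x = eu := (dEu x y hp).deriv
  have r2 : deriv (fun v => E x v) y = ev := (dEv x y hp).deriv
  have r3 : deriv (fun v => deriv (fun u => E u v) x) y = euv := by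
    have heq : (fun v => deriv (fun u => E u v) x) =ᶠ[nhds y] (fun v => g (x, v) (1, 0)) := by
      filter_upwards [hVnhds] with v hv
      exact (dEu x v hv).deriv
    rw [heq.deriv_eq]
    exact (dGv x y (1, 0) hp).deriv
  have l1 : deriv (fun u => deriv (fun v => σ - 1 / (E u v) ^ 2) y / E u y) x
      = ((2 * euv * (e ^ 3) - (2 * ev) * ((3 : ℕ) * e ^ (3 - 1) * eu)) / (e ^ 3) ^ 2 * e
          - (2 * ev / e ^ 3) * eu) / e ^ 2 := by
    have heq : (fun u => deriv (fun v => σ - 1 / (E u v) ^ 2) y / E u y)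
        =ᶠ[nhds x] (fun u => (2 * g (u, y) (0, 1) / (E u y) ^ 3) / E u y) := by
      filter_upwards [hUnhds] with u hu
      rw [(dKv u y hu).deriv]
    rw [heq.deriv_eq]
    have hA : HasDerivAt (fun u => 2 * g (u, y) (0, 1)) (2 * fderiv ℝ g (x, y) (1, 0) (0, 1)) x :=
      (dGu x y (0, 1) hp).const_mul 2
    rw [hsymm _ hp] at hA
    have hB : HasDerivAt (fun u => (E u y) ^ 3) ((3 : ℕ) * e ^ (3 - 1) * eu) x := (dEu x y hp).pow 3
    have hq1 := hA.div hB (pow_ne_zero 3 hne)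
    have hq2 := hq1.div (dEu x y hp) hne
    exact hq2.deriv
  have l2 : deriv (fun v => deriv (fun u => σ - 1 / (E u v) ^ 2) x / E x v) y
      = ((2 * euv * (e ^ 3) - (2 * eu) * ((3 : ℕ) * e ^ (3 - 1) * ev)) / (e ^ 3) ^ 2 * e
          - (2 * eu / e ^ 3) * ev) / e ^ 2 := by
    have heq : (fun v => deriv (fun u => σ - 1 / (E u v) ^ 2) x / E x v)
        =ᶠ[nhds y] (fun v => (2 * g (x, v) (1, 0) / (E x v) ^ 3) / E x v) := by
      filter_upwards [hVnhds] with v hv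
      rw [(dKu x v hv).deriv]
    rw [heq.deriv_eq]
    have hA : HasDerivAt (fun v => 2 * g (x, v) (1, 0)) (2 * euv) y :=
      (dGv x y (1, 0) hp).const_mul 2
    have hB : HasDerivAt (fun v => (E x v) ^ 3) ((3 : ℕ) * e ^ (3 - 1) * ev) y := (dEv x y hp).pow 3
    have hq1 := hA.div hB (pow_ne_zero 3 hne)
    have hq2 := hq1.div (dEv x y hp) hne
    exact hq2.deriv
  rw [l1, l2, r1, r2, r3]
  have key : (1 / e) *
      (((2 * euv * (e ^ 3) - (2 * ev) * ((3 : ℕ) * e ^ (3 - 1) * eu)) / (e ^ 3) ^ 2 * e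
          - (2 * ev / e ^ 3) * eu) / e ^ 2
        + ((2 * euv * (e ^ 3) - (2 * eu) * ((3 : ℕ) * e ^ (3 - 1) * ev)) / (e ^ 3) ^ 2 * e
          - (2 * eu / e ^ 3) * ev) / e ^ 2)
      = 4 * (e * euv - 4 * eu * ev) / e ^ 6 := by
    field_simp
    ring
  rw [key, div_eq_zero_iff]
  constructor
  · rintro (h | h)
    · have h4 : e * euv - 4 * eu * ev = 0 := by
        rcases mul_eq_zero.1 h with h' | h'
        · norm_num at h'
        · exact h'
      linarith
    · exact absurd h (pow_ne_zero 6 hne)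
  · intro h
    left
    rw [h, mul_zero]
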